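/- Suppose all Vᵢ equal a scalar v > 0 and that (a0, b0) with a0 > 0, b0 > 0 and v − 1/a0 − 1/b0 > 0 satisfies the Hamling odds-ratio system. Then the ratio c = a0/b0 satisfies (r1 + nc)(1 − pzc) = (1−p)zc(n + r2·c), where r1 = Σᵢ 1/Rᵢ and r2 = Σᵢ Rᵢ. -/

import Mathlib

open Finset

/-- The Hamling odds-ratio system of nonlinear equations in the unknowns `(a0, b0)`. -/
def hamlingORSystem (n : ℕ) (V R : Fin n → ℝ) (p z : ℝ) (a0 b0 : ℝ) : Prop :=
  ((1 - p) / p) * b0 = ∑ i, (1 + b0 / (a0 * R i)) / (V i - 1 / a0 - 1 / b0) ∧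
  b0 / (z * p) - a0 = ∑ i, (1 + a0 * R i / b0) / (V i - 1 / a0 - 1 / b0)

/-- In the equivariant case (all variances equal to `v > 0`), any positive feasible
solution `(a0, b0)` of the Hamling odds-ratio system has ratio `c = a0/b0` satisfying
`(r1 + nc)(1 − pzc) = (1−p)zc(n + r2 c)`. -/
theorem hamlingOR_ratio_equation
    (n : ℕ) (hn : 1 ≤ n) (V R : Fin n → ℝ) (hV : ∀ i, 0 < V i) (hR : ∀ i, 0 < R i)
    (v : ℝ) (hv : 0 < v) (hVv : ∀ i, V i = v)
    (p z : ℝ) (hp0 : 0 < p) (hp1 : p < 1) (hz : 0 < z)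
    (a0 b0 : ℝ) (ha0 : 0 < a0) (hb0 : 0 < b0)
    (hden : 0 < v - 1 / a0 - 1 / b0)
    (hsol : hamlingORSystem n V R p z a0 b0)
    (r1 r2 c : ℝ) (hr1 : r1 = ∑ i, (R i)⁻¹) (hr2 : r2 = ∑ i, R i)
    (hc : c = a0 / b0) :
    (r1 + (n : ℝ) * c) * (1 - p * z * c) = (1 - p) * z * c * ((n : ℝ) + r2 * c) := by
  obtain ⟨h1, h2⟩ := hsol
  set D : ℝ := v - 1 / a0 - 1 / b0 with hD
  have ha0' : a0 ≠ 0 := ha0.ne'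
  have hb0' : b0 ≠ 0 := hb0.ne'
  have hDne : D ≠ 0 := hden.ne'
  have hpne : p ≠ 0 := hp0.ne'
  have hzne : z ≠ 0 := hz.ne'
  have s1 : ∑ i, (1 + b0 / (a0 * R i)) = (n : ℝ) + (b0 / a0) * r1 := by
    rw [Finset.sum_add_distrib, Finset.sum_const, card_univ, Fintype.card_fin, hr1,
      Finset.mul_sum, nsmul_eq_mul, mul_one]
    congr 1
    refine Finset.sum_congr rfl fun i _ => ?_
    field_simp
  have s2 : ∑ i, (1 + a0 * R i / b0) = (n : ℝ) + (a0 / b0) * r2 := by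
    rw [Finset.sum_add_distrib, Finset.sum_const, card_univ, Fintype.card_fin, hr2,
      Finset.mul_sum, nsmul_eq_mul, mul_one]
    congr 1
    refine Finset.sum_congr rfl fun i _ => ?_
    field_simp
  have h1' : ((1 - p) / p) * b0 * D = (n : ℝ) + (b0 / a0) * r1 := by
    rw [h1]
    simp only [hVv]
    rw [← Finset.sum_div, s1, div_mul_cancel₀ _ hDne]
  have h2' : (b0 / (z * p) - a0) * D = (n : ℝ) + (a0 / b0) * r2 := by
    rw [h2]
    simp only [hVv]
    rw [← Finset.sum_div, s2, div_mul_cancel₀ _ hDne]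
  have key : ((n : ℝ) + (b0 / a0) * r1) * (b0 / (z * p) - a0) =
      ((n : ℝ) + (a0 / b0) * r2) * (((1 - p) / p) * b0) := by
    rw [← h1', ← h2']
    ring
  subst hc
  field_simp at key ⊢
  have hbp : b0 * p ≠ 0 := mul_ne_zero hb0' hpne
  refine mul_right_cancel₀ hbp ?_
  linear_combination (b0 * p) * key
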